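/- (Maximum principle on a fixed domain.) Let J satisfy condition (J1), let d > 0, T > 0, h₀ > 0, and set Ω₀ = (0,T] × [-h₀, h₀]. Suppose u is continuous on [0,T] × [-h₀, h₀], continuously differentiable in t, and for some bounded measurable function ϱ on Ω₀ it satisfies u_t(t,x) ≥ d ∫_{-h₀}^{h₀} J(x-y) u(t,y) dy - d u(t,x) + ϱ(t,x) u(t,x) for (t,x) ∈ Ω₀, and u(0,x) ≥ 0 for |x| ≤ h₀. Then u ≥ 0 on [0,T] × [-h₀, h₀]. Moreover, if u(0,·) is not identically 0 on [-h₀, h₀], then u > 0 in Ω₀. -/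

import Mathlib

open MeasureTheory Filter Set Topology Real

/-- Condition (J1) on the kernel `J`. -/
structure KernelCond (J : ℝ → ℝ) : Prop where
  lipschitz : ∃ K, LipschitzWith K J
  pos_at_zero : 0 < J 0
  nonneg : ∀ x, 0 ≤ J x
  integrable : Integrable J
  integral_one : ∫ x, J x = 1
  symm : ∀ x, J (-x) = J x
  bounded : ∃ M, ∀ x, J x ≤ M

-- auxiliary lemmas
private lemma deriv_nonpos_left {f : ℝ → ℝ} {a t₀ : ℝ} (ht₀ : 0 < t₀)
    (hf : HasDerivAt f a t₀) (hmin : ∀ t ∈ Icc 0 t₀, f t₀ ≤ f t) : a ≤ 0 := by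
  have h1 : IsLocalMinOn f (Icc 0 t₀) t₀ :=
    Filter.eventually_iff_exists_mem.2 ⟨Icc 0 t₀, self_mem_nhdsWithin, hmin⟩
  have h2 : (0:ℝ) - t₀ ∈ posTangentConeAt (Icc 0 t₀) t₀ := by
    apply sub_mem_posTangentConeAt_of_segment_subset
    rw [segment_eq_uIcc]
    exact uIcc_subset_Icc (right_mem_Icc.2 ht₀.le) (left_mem_Icc.2 ht₀.le)
  have h3 := h1.hasFDerivWithinAt_nonneg hf.hasFDerivAt.hasFDerivWithinAt h2
  simp only [ContinuousLinearMap.smulRight_apply, ContinuousLinearMap.one_apply,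
    ContinuousLinearMap.toSpanSingleton_apply, smul_eq_mul, zero_sub] at h3
  nlinarith


private lemma mp_interval {h₀ z ℓ : ℝ} (hh₀ : 0 < h₀) (hz : z ∈ Icc (-h₀) h₀)
    (hℓ : 0 < ℓ) (hℓh : ℓ ≤ h₀) :
    ∃ a1, Icc a1 (a1 + ℓ) ⊆ Icc (-h₀) h₀ ∧ ∀ y ∈ Icc a1 (a1 + ℓ), |y - z| ≤ ℓ := by
  obtain ⟨hz1, hz2⟩ := hz
  rcases le_or_gt (z + ℓ) h₀ with h | h
  · exact ⟨z, fun y hy => ⟨by linarith [hy.1], by linarith [hy.2]⟩,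
      fun y hy => abs_le.2 ⟨by linarith [hy.1], by linarith [hy.2]⟩⟩
  · refine ⟨z - ℓ, fun y hy => ⟨?_, ?_⟩, fun y hy => abs_le.2 ⟨?_, ?_⟩⟩
    · have := hy.1; linarith
    · have := hy.2; linarith
    · have := hy.1; linarith
    · have := hy.2; linarith

section
variable {J : ℝ → ℝ} {d T h₀ M : ℝ} {u ϱ : ℝ → ℝ → ℝ}

private lemma mp_kernel_int_le_one (hJnn : ∀ x, 0 ≤ J x) (hJint : Integrable J)
    (hJone : ∫ x, J x = 1) {a b : ℝ} (hab : a ≤ b) (x : ℝ) :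
    ∫ y in a..b, J (x - y) ≤ 1 := by
  have hint : Integrable (fun y => J (x - y)) := hJint.comp_sub_left x
  rw [intervalIntegral.integral_of_le hab]
  calc ∫ y in Ioc a b, J (x - y) ≤ ∫ y, J (x - y) :=
        setIntegral_le_integral hint (Filter.Eventually.of_forall fun y => hJnn _)
    _ = ∫ y, J y := integral_sub_left_eq_self J _ x
    _ = 1 := hJone

private lemma mp_integrable (hJcont : Continuous J) (hh₀ : 0 < h₀)
    (hucont : ContinuousOn (fun p : ℝ × ℝ => u p.1 p.2) (Icc 0 T ×ˢ Icc (-h₀) h₀))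
    {t : ℝ} (ht : t ∈ Icc 0 T) (x : ℝ) :
    IntervalIntegrable (fun y => J (x - y) * u t y) volume (-h₀) h₀ := by
  have h1 : ContinuousOn (fun y => J (x - y) * u t y) (Icc (-h₀) h₀) := by
    apply ContinuousOn.mul
    · exact (hJcont.comp (continuous_const.sub continuous_id)).continuousOn
    · exact ContinuousOn.comp (g := fun p : ℝ × ℝ => u p.1 p.2)
        (f := fun y : ℝ => (t, y)) hucont
        (Continuous.continuousOn (by fun_prop)) (fun y hy => ⟨ht, hy⟩)
  exact h1.intervalIntegrable_of_Icc (by linarith)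

private lemma mp_part1
    (hJcont : Continuous J) (hJnn : ∀ x, 0 ≤ J x) (hJint : Integrable J)
    (hJone : ∫ x, J x = 1)
    (hd : 0 < d) (hT : 0 < T) (hh₀ : 0 < h₀)
    (hucont : ContinuousOn (fun p : ℝ × ℝ => u p.1 p.2) (Icc 0 T ×ˢ Icc (-h₀) h₀))
    (hM0 : 0 ≤ M) (hMb : ∀ t x, |ϱ t x| ≤ M)
    (hu_pde : ∀ t ∈ Ioc 0 T, ∀ x ∈ Icc (-h₀) h₀,
      DifferentiableAt ℝ (fun s => u s x) t ∧
      d * ((∫ y in (-h₀)..h₀, J (x - y) * u t y) - u t x) + ϱ t x * u t x ≤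
        deriv (fun s => u s x) t)
    (hinit : ∀ x ∈ Icc (-h₀) h₀, 0 ≤ u 0 x) :
    ∀ t ∈ Icc 0 T, ∀ x ∈ Icc (-h₀) h₀, 0 ≤ u t x := by
  have hh' : -h₀ ≤ h₀ := by linarith
  suffices key : ∀ ε > (0:ℝ), ∀ t ∈ Icc 0 T, ∀ x ∈ Icc (-h₀) h₀,
      0 < u t x + ε * Real.exp ((M + 1) * t) by
    intro t ht x hx
    by_contra hneg
    push_neg at hneg
    have hE : 0 < Real.exp ((M + 1) * t) := Real.exp_pos _
    have hlt := key (-u t x / (2 * Real.exp ((M + 1) * t))) (div_pos (by linarith) (by positivity)) t ht x hx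
    have h2 : -u t x / (2 * Real.exp ((M + 1) * t)) * Real.exp ((M + 1) * t) = -u t x / 2 := by
      field_simp
    rw [h2] at hlt
    linarith
  intro ε hε
  by_contra hbad
  push_neg at hbad
  obtain ⟨t₁, ht₁, x₁, hx₁, hvx₁⟩ := hbad
  set v : ℝ × ℝ → ℝ := fun p => u p.1 p.2 + ε * Real.exp ((M + 1) * p.1) with hv
  have hvcont : ContinuousOn v (Icc 0 T ×ˢ Icc (-h₀) h₀) := by
    apply hucont.add
    exact (Continuous.continuousOn (by fun_prop))
  set S : Set (ℝ × ℝ) := (Icc 0 T ×ˢ Icc (-h₀) h₀) ∩ v ⁻¹' (Iic 0) with hS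
  have hScomp : IsCompact S := by
    have hK : IsCompact (Icc 0 T ×ˢ Icc (-h₀) h₀) := isCompact_Icc.prod isCompact_Icc
    exact hK.of_isClosed_subset
      (hvcont.preimage_isClosed_of_isClosed hK.isClosed isClosed_Iic) inter_subset_left
  have hSne : S.Nonempty := ⟨(t₁, x₁), ⟨⟨ht₁, hx₁⟩, hvx₁⟩⟩
  set A : Set ℝ := Prod.fst '' S with hA
  have hAcomp : IsCompact A := hScomp.image continuous_fst
  have hAne : A.Nonempty := hSne.image _
  have ht₀A : sInf A ∈ A := hAcomp.isClosed.csInf_mem hAne hAcomp.bddBelow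
  obtain ⟨⟨t₀', x₀⟩, hpS, hfst⟩ := ht₀A
  simp only at hfst
  obtain ⟨⟨ht₀mem, hx₀mem⟩, hv₀'⟩ := hpS
  simp only at ht₀mem hx₀mem
  have hv₀ : v (t₀', x₀) ≤ 0 := hv₀'
  have ht₀pos : 0 < t₀' := by
    rcases lt_or_eq_of_le ht₀mem.1 with h | h
    · exact h
    · exfalso
      have h1 := hinit x₀ hx₀mem
      simp only [hv] at hv₀
      rw [← h] at hv₀
      simp only [mul_zero, Real.exp_zero, mul_one] at hv₀
      linarith
  have hbefore : ∀ t ∈ Ico 0 t₀', ∀ y ∈ Icc (-h₀) h₀, 0 < v (t, y) := by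
    intro t ht y hy
    by_contra h
    push_neg at h
    have htA : t ∈ A := ⟨(t, y), ⟨⟨⟨ht.1, ht.2.le.trans ht₀mem.2⟩, hy⟩, h⟩, rfl⟩
    have := csInf_le hAcomp.bddBelow htA
    rw [← hfst] at this
    exact absurd this (not_le.2 ht.2)
  have hat : ∀ y ∈ Icc (-h₀) h₀, 0 ≤ v (t₀', y) := by
    intro y hy
    have hcy : ContinuousWithinAt (fun t => v (t, y)) (Ico 0 t₀') t₀' := by
      have h1 : ContinuousOn (fun t => v (t, y)) (Icc 0 T) :=
        ContinuousOn.comp hvcont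
          (Continuous.continuousOn (continuous_id.prodMk continuous_const))
          (fun t ht => ⟨ht, hy⟩)
      exact (h1 t₀' ht₀mem).mono (Ico_subset_Icc_self.trans (Icc_subset_Icc le_rfl ht₀mem.2))
    have hne : (𝓝[Ico 0 t₀'] t₀').NeBot := by
      refine mem_closure_iff_nhdsWithin_neBot.1 ?_
      rw [closure_Ico ht₀pos.ne]
      exact right_mem_Icc.2 ht₀pos.le
    exact ge_of_tendsto hcy (eventually_nhdsWithin_of_forall fun t ht => (hbefore t ht y hy).le)
  have hveq : v (t₀', x₀) = 0 := le_antisymm hv₀ (hat x₀ hx₀mem)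
  obtain ⟨hdiff, hineq⟩ := hu_pde t₀' ⟨ht₀pos, ht₀mem.2⟩ x₀ hx₀mem
  set E : ℝ := ε * Real.exp ((M + 1) * t₀') with hE
  have hEpos : 0 < E := by positivity
  have hu₀ : u t₀' x₀ = -E := by
    simp only [hv] at hveq
    simp only [hE]
    linarith
  have hf : HasDerivAt (fun t => u t x₀ + ε * Real.exp ((M + 1) * t))
      (deriv (fun s => u s x₀) t₀' + ε * (Real.exp ((M + 1) * t₀') * (M + 1))) t₀' := by
    have h2 : HasDerivAt (fun t : ℝ => Real.exp ((M + 1) * t))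
        (Real.exp ((M + 1) * t₀') * (M + 1)) t₀' := by
      simpa [mul_comm] using ((hasDerivAt_id t₀').const_mul (M + 1)).exp
    exact hdiff.hasDerivAt.add (h2.const_mul ε)
  have hmin : ∀ t ∈ Icc 0 t₀', u t₀' x₀ + ε * Real.exp ((M + 1) * t₀') ≤
      u t x₀ + ε * Real.exp ((M + 1) * t) := by
    intro t ht
    have h0 : u t₀' x₀ + ε * Real.exp ((M + 1) * t₀') = 0 := hveq
    rw [h0]
    rcases eq_or_lt_of_le ht.2 with h | h
    · subst h; rw [h0]
    · exact (hbefore t ⟨ht.1, h⟩ x₀ hx₀mem).le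
  have hder_nonpos := deriv_nonpos_left ht₀pos hf hmin
  -- lower bound on the integral
  have hIKnn : 0 ≤ ∫ y in (-h₀)..h₀, J (x₀ - y) :=
    intervalIntegral.integral_nonneg hh' (fun y _ => hJnn _)
  have hIK1 : ∫ y in (-h₀)..h₀, J (x₀ - y) ≤ 1 := mp_kernel_int_le_one hJnn hJint hJone hh' x₀
  have hIbound : -E ≤ ∫ y in (-h₀)..h₀, J (x₀ - y) * u t₀' y := by
    have h1 : ∫ y in (-h₀)..h₀, J (x₀ - y) * (-E) ≤ ∫ y in (-h₀)..h₀, J (x₀ - y) * u t₀' y := by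
      apply intervalIntegral.integral_mono_on hh'
      · exact (((hJcont.comp (continuous_const.sub continuous_id)).mul
          continuous_const).intervalIntegrable _ _)
      · exact mp_integrable hJcont hh₀ hucont ht₀mem x₀
      · intro y hy
        have h2 : -E ≤ u t₀' y := by
          have h3 := hat y hy
          simp only [hv] at h3
          simp only [hE]
          linarith
        exact mul_le_mul_of_nonneg_left h2 (hJnn _)
    have h2 : ∫ y in (-h₀)..h₀, J (x₀ - y) * (-E) = (∫ y in (-h₀)..h₀, J (x₀ - y)) * (-E) :=
      intervalIntegral.integral_mul_const _ _
    nlinarith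
  -- final contradiction
  have hρ := abs_le.1 (hMb t₀' x₀)
  have h1 : -(M * E) ≤ ϱ t₀' x₀ * u t₀' x₀ := by
    rw [hu₀]; nlinarith
  have h2 : 0 ≤ d * ((∫ y in (-h₀)..h₀, J (x₀ - y) * u t₀' y) - u t₀' x₀) := by
    rw [hu₀]; nlinarith
  have h3 : ε * (Real.exp ((M + 1) * t₀') * (M + 1)) = E * (M + 1) := by
    simp only [hE]; ring
  rw [h3] at hder_nonpos
  nlinarith


private lemma mp_mono_aux
    (hJcont : Continuous J) (hJnn : ∀ x, 0 ≤ J x)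
    (hd : 0 < d) (hT : 0 < T) (hh₀ : 0 < h₀)
    (hucont : ContinuousOn (fun p : ℝ × ℝ => u p.1 p.2) (Icc 0 T ×ˢ Icc (-h₀) h₀))
    (hM0 : 0 ≤ M) (hMb : ∀ t x, |ϱ t x| ≤ M)
    (hu_pde : ∀ t ∈ Ioc 0 T, ∀ x ∈ Icc (-h₀) h₀,
      DifferentiableAt ℝ (fun s => u s x) t ∧
      d * ((∫ y in (-h₀)..h₀, J (x - y) * u t y) - u t x) + ϱ t x * u t x ≤
        deriv (fun s => u s x) t)
    (hpos : ∀ t ∈ Icc 0 T, ∀ x ∈ Icc (-h₀) h₀, 0 ≤ u t x)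
    {x : ℝ} (hx : x ∈ Icc (-h₀) h₀) {s : ℝ} (hs : s ∈ Ico 0 T)
    {α : ℝ} (hα : 0 ≤ α)
    (hint : ∀ τ ∈ Ioo s T, α ≤ d * ∫ y in (-h₀)..h₀, J (x - y) * u τ y) :
    MonotoneOn (fun τ => u τ x * Real.exp ((d + M) * τ) - α * τ) (Icc s T) := by
  have hc0 : 0 ≤ d + M := by positivity
  have hsub : Icc s T ⊆ Icc 0 T := Icc_subset_Icc hs.1 le_rfl
  have hcont1 : ContinuousOn (fun τ => u τ x) (Icc s T) := by
    have : ContinuousOn (fun τ => u τ x) (Icc 0 T) :=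
      ContinuousOn.comp hucont
        (Continuous.continuousOn (continuous_id.prodMk continuous_const))
        (fun t ht => ⟨ht, hx⟩)
    exact this.mono hsub
  have hcont : ContinuousOn (fun τ => u τ x * Real.exp ((d + M) * τ) - α * τ) (Icc s T) := by
    exact ((hcont1.mul (by fun_prop)).sub (by fun_prop))
  have hD : ∀ τ ∈ Ioo s T,
      HasDerivAt (fun τ => u τ x * Real.exp ((d + M) * τ) - α * τ)
        (deriv (fun σ => u σ x) τ * Real.exp ((d + M) * τ) + u τ x * (Real.exp ((d + M) * τ) * (d + M)) - α) τ := by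
    intro τ hτ
    have hτ' : τ ∈ Ioc 0 T := ⟨lt_of_le_of_lt hs.1 hτ.1, hτ.2.le⟩
    have h1 : HasDerivAt (fun σ => u σ x) (deriv (fun σ => u σ x) τ) τ :=
      (hu_pde τ hτ' x hx).1.hasDerivAt
    have h2 : HasDerivAt (fun σ : ℝ => Real.exp ((d + M) * σ)) (Real.exp ((d + M) * τ) * (d + M)) τ := by
      simpa [mul_comm] using ((hasDerivAt_id τ).const_mul (d + M)).exp
    have h3 : HasDerivAt (fun σ : ℝ => α * σ) α τ := by
      simpa using (hasDerivAt_id τ).const_mul α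
    exact (h1.mul h2).sub h3
  rw [show Icc s T = Icc s T from rfl]
  apply monotoneOn_of_deriv_nonneg (convex_Icc s T) hcont
  · intro τ hτ
    rw [interior_Icc] at hτ
    exact ((hD τ hτ).differentiableAt).differentiableWithinAt
  · intro τ hτ
    rw [interior_Icc] at hτ
    rw [(hD τ hτ).deriv]
    have hτ' : τ ∈ Ioc 0 T := ⟨lt_of_le_of_lt hs.1 hτ.1, hτ.2.le⟩
    have hpde := (hu_pde τ hτ' x hx).2
    have hI := hint τ hτ
    have hup : 0 ≤ u τ x := hpos τ ⟨hτ'.1.le, hτ'.2⟩ x hx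
    have hρ : -M ≤ ϱ τ x := neg_le_of_abs_le (hMb τ x)
    have he1 : (1:ℝ) ≤ Real.exp ((d + M) * τ) := Real.one_le_exp (mul_nonneg hc0 hτ'.1.le)
    have he0 : (0:ℝ) < Real.exp ((d + M) * τ) := Real.exp_pos _
    have hfact : 0 ≤ u τ x * ((M + ϱ τ x) * Real.exp ((d + M) * τ)) :=
      mul_nonneg hup (mul_nonneg (by linarith) he0.le)
    nlinarith [mul_le_mul_of_nonneg_right hpde he0.le, hfact, hI, hα, he1, he0]


private lemma mp_push
    (hJcont : Continuous J) (hJnn : ∀ x, 0 ≤ J x)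
    (hd : 0 < d) (hT : 0 < T) (hh₀ : 0 < h₀)
    (hucont : ContinuousOn (fun p : ℝ × ℝ => u p.1 p.2) (Icc 0 T ×ˢ Icc (-h₀) h₀))
    (hM0 : 0 ≤ M) (hMb : ∀ t x, |ϱ t x| ≤ M)
    (hu_pde : ∀ t ∈ Ioc 0 T, ∀ x ∈ Icc (-h₀) h₀,
      DifferentiableAt ℝ (fun s => u s x) t ∧
      d * ((∫ y in (-h₀)..h₀, J (x - y) * u t y) - u t x) + ϱ t x * u t x ≤
        deriv (fun s => u s x) t)
    (hpos : ∀ t ∈ Icc 0 T, ∀ x ∈ Icc (-h₀) h₀, 0 ≤ u t x)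
    {δ r : ℝ} (hδ : 0 < δ) (hr : 0 < r) (hJr : ∀ z, |z| ≤ r → δ ≤ J z)
    {x : ℝ} (hx : x ∈ Icc (-h₀) h₀) {s : ℝ} (hs : s ∈ Ico 0 T)
    {a L η : ℝ} (hL : 0 < L) (hη : 0 < η)
    (hab : Icc a (a + L) ⊆ Icc (-h₀) h₀)
    (hnear : ∀ y ∈ Icc a (a + L), |x - y| ≤ r)
    (hlow : ∀ τ ∈ Icc s T, ∀ y ∈ Icc a (a + L), η ≤ u τ y) :
    ∀ t ∈ Ioc s T, 0 < u t x := by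
  have hh' : -h₀ ≤ h₀ := by linarith
  have haL : a ≤ a + L := by linarith
  have hα : 0 < d * (δ * η * L) := by positivity
  have hint : ∀ τ ∈ Ioo s T, d * (δ * η * L) ≤ d * ∫ y in (-h₀)..h₀, J (x - y) * u τ y := by
    intro τ hτ
    have hτIcc : τ ∈ Icc 0 T := ⟨hs.1.trans hτ.1.le, hτ.2.le⟩
    have hIntBig := mp_integrable hJcont hh₀ hucont hτIcc x
    have hIntSmall : IntervalIntegrable (fun y => J (x - y) * u τ y) volume a (a + L) := by
      apply hIntBig.mono_set
      rw [uIcc_of_le haL, uIcc_of_le hh']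
      exact hab
    have h1 : δ * η * L ≤ ∫ y in a..(a + L), J (x - y) * u τ y := by
      have hmem : ∀ y ∈ Icc a (a + L), δ * η ≤ J (x - y) * u τ y := by
        intro y hy
        exact mul_le_mul (hJr _ (hnear y hy)) (hlow τ ⟨hτ.1.le, hτ.2.le⟩ y hy) hη.le
          ((hδ.le).trans (hJr _ (hnear y hy)))
      calc δ * η * L = ∫ _ in a..(a + L), δ * η := by
            rw [intervalIntegral.integral_const]; simp; ring
        _ ≤ ∫ y in a..(a + L), J (x - y) * u τ y :=
            intervalIntegral.integral_mono_on haL intervalIntegrable_const hIntSmall hmem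
    have h2 : (∫ y in a..(a + L), J (x - y) * u τ y) ≤ ∫ y in (-h₀)..h₀, J (x - y) * u τ y := by
      apply intervalIntegral.integral_mono_interval (hab (left_mem_Icc.2 haL)).1 haL
        (hab (right_mem_Icc.2 haL)).2 ?_ hIntBig
      filter_upwards [ae_restrict_mem measurableSet_Ioc] with y hy
      exact mul_nonneg (hJnn _) (hpos τ hτIcc y (Ioc_subset_Icc_self hy))
    nlinarith
  have hmono := mp_mono_aux hJcont hJnn hd hT hh₀ hucont hM0 hMb hu_pde hpos hx hs hα.le hint
  intro t ht
  have h1 := hmono (left_mem_Icc.2 hs.2.le) ⟨ht.1.le, ht.2⟩ ht.1.le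
  simp only at h1
  have hus : 0 ≤ u s x := hpos s ⟨hs.1, hs.2.le⟩ x hx
  have hes : (0:ℝ) < Real.exp ((d + M) * s) := Real.exp_pos _
  have het : (0:ℝ) < Real.exp ((d + M) * t) := Real.exp_pos _
  have h2 : 0 < u t x * Real.exp ((d + M) * t) := by
    nlinarith [mul_nonneg hus hes.le, mul_pos hα (sub_pos.2 ht.1)]
  by_contra hc
  push_neg at hc
  nlinarith [mul_nonneg (neg_nonneg.2 hc) het.le]

private lemma mp_part2
    (hJcont : Continuous J) (hJnn : ∀ x, 0 ≤ J x) (hJ0 : 0 < J 0)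
    (hd : 0 < d) (hT : 0 < T) (hh₀ : 0 < h₀)
    (hucont : ContinuousOn (fun p : ℝ × ℝ => u p.1 p.2) (Icc 0 T ×ˢ Icc (-h₀) h₀))
    (hM0 : 0 ≤ M) (hMb : ∀ t x, |ϱ t x| ≤ M)
    (hu_pde : ∀ t ∈ Ioc 0 T, ∀ x ∈ Icc (-h₀) h₀,
      DifferentiableAt ℝ (fun s => u s x) t ∧
      d * ((∫ y in (-h₀)..h₀, J (x - y) * u t y) - u t x) + ϱ t x * u t x ≤
        deriv (fun s => u s x) t)
    (hinit : ∀ x ∈ Icc (-h₀) h₀, 0 ≤ u 0 x)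
    (hpos : ∀ t ∈ Icc 0 T, ∀ x ∈ Icc (-h₀) h₀, 0 ≤ u t x)
    {x₁ : ℝ} (hx₁ : x₁ ∈ Icc (-h₀) h₀) (hne : u 0 x₁ ≠ 0) :
    ∀ t ∈ Ioc 0 T, ∀ x ∈ Icc (-h₀) h₀, 0 < u t x := by
  have hh' : -h₀ ≤ h₀ := by linarith
  have hu₁ : 0 < u 0 x₁ := lt_of_le_of_ne (hinit x₁ hx₁) (Ne.symm hne)
  have hc0 : (0:ℝ) ≤ d + M := by positivity
  -- find r with J ≥ J 0 / 2 on [-r, r]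
  obtain ⟨r', hr', hball⟩ := Metric.continuousAt_iff.1 hJcont.continuousAt (J 0 / 2)
    (by positivity)
  set r : ℝ := r' / 2 with hrdef
  have hrpos : 0 < r := by positivity
  have hJr : ∀ z, |z| ≤ r → J 0 / 2 ≤ J z := by
    intro z hz
    have h1 : dist z 0 < r' := by rw [Real.dist_eq, sub_zero]; linarith
    have h2 := hball h1
    rw [Real.dist_eq] at h2
    linarith [(abs_lt.1 h2).1]
  -- continuity of u 0 · at x₁
  have hcont0 : ContinuousOn (fun y => u 0 y) (Icc (-h₀) h₀) :=
    ContinuousOn.comp (g := fun p : ℝ × ℝ => u p.1 p.2) (f := fun y : ℝ => ((0:ℝ), y)) hucont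
      (Continuous.continuousOn (by fun_prop))
      (fun y hy => ⟨left_mem_Icc.2 hT.le, hy⟩)
  obtain ⟨ρ, hρ, hballu⟩ := Metric.continuousWithinAt_iff.1 (hcont0 x₁ hx₁) (u 0 x₁ / 2)
    (by positivity)
  -- the basic radius
  set ρ₀ : ℝ := min (min (ρ / 2) (r / 4)) h₀ with hρ₀def
  have hρ₀pos : 0 < ρ₀ := lt_min (lt_min (by positivity) (by positivity)) hh₀
  have hρ₀ρ : ρ₀ < ρ := lt_of_le_of_lt ((min_le_left _ _).trans (min_le_left _ _)) (by linarith)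
  have hρ₀r : ρ₀ ≤ r / 4 := (min_le_left _ _).trans (min_le_right _ _)
  have hρ₀h : ρ₀ ≤ h₀ := min_le_right _ _
  -- Lemma A consequence
  have hlemA : ∀ y ∈ Icc (-h₀) h₀, ∀ τ ∈ Icc 0 T, u 0 y ≤ u τ y * Real.exp ((d + M) * τ) := by
    intro y hy τ hτ
    have hint0 : ∀ σ ∈ Ioo (0:ℝ) T, (0:ℝ) ≤ d * ∫ z in (-h₀)..h₀, J (y - z) * u σ z := by
      intro σ hσ
      exact mul_nonneg hd.le (intervalIntegral.integral_nonneg hh'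
        (fun z hz => mul_nonneg (hJnn _) (hpos σ ⟨hσ.1.le, hσ.2.le⟩ z hz)))
    have hmono := mp_mono_aux hJcont hJnn hd hT hh₀ hucont hM0 hMb hu_pde hpos hy
      (Set.mem_Ico.2 ⟨le_rfl, hT⟩) le_rfl hint0
    have h1 := hmono (left_mem_Icc.2 hT.le) hτ hτ.1
    simp only [mul_zero, Real.exp_zero, mul_one, zero_mul, sub_zero] at h1
    linarith
  -- the base interval and lower bound
  obtain ⟨a0, ha0sub, ha0near⟩ := mp_interval hh₀ hx₁ hρ₀pos hρ₀h
  set η : ℝ := (u 0 x₁ / 2) * Real.exp (-((d + M) * T)) with hηdef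
  have hηpos : 0 < η := by positivity
  have hlow0 : ∀ τ ∈ Icc 0 T, ∀ y ∈ Icc a0 (a0 + ρ₀), η ≤ u τ y := by
    intro τ hτ y hy
    have hyIcc : y ∈ Icc (-h₀) h₀ := ha0sub hy
    have hynear : dist y x₁ < ρ := by
      rw [Real.dist_eq]; linarith [ha0near y hy]
    have h3 := hballu hyIcc hynear
    rw [Real.dist_eq] at h3
    have e3 : u 0 x₁ / 2 < u 0 y := by linarith [(abs_lt.1 h3).1]
    have e2 := hlemA y hyIcc τ hτ
    have e1 : Real.exp ((d + M) * τ) ≤ Real.exp ((d + M) * T) :=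
      Real.exp_le_exp.2 (mul_le_mul_of_nonneg_left hτ.2 hc0)
    have e4 : 0 ≤ u τ y := hpos τ hτ y hyIcc
    have e5 : Real.exp ((d + M) * T) * Real.exp (-((d + M) * T)) = 1 := by
      rw [← Real.exp_add]; simp
    have f1 := mul_le_mul_of_nonneg_right e2 (Real.exp_pos (-((d + M) * T))).le
    have f2 := mul_le_mul_of_nonneg_right (mul_le_mul_of_nonneg_left e1 e4)
      (Real.exp_pos (-((d + M) * T))).le
    have f3 : u τ y * Real.exp ((d + M) * T) * Real.exp (-((d + M) * T)) = u τ y := by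
      rw [mul_assoc, e5, mul_one]
    rw [f3] at f2
    have f4 := mul_le_mul_of_nonneg_right e3.le (Real.exp_pos (-((d + M) * T))).le
    simp only [hηdef]
    linarith
  -- the induction
  have main : ∀ k : ℕ, ∀ x ∈ Icc (-h₀) h₀, |x - x₁| ≤ ρ₀ + k * ρ₀ →
      ∀ t ∈ Ioc 0 T, 0 < u t x := by
    intro k
    induction k with
    | zero =>
      intro x hx hdist t ht
      simp only [Nat.cast_zero, zero_mul, add_zero] at hdist
      refine mp_push hJcont hJnn hd hT hh₀ hucont hM0 hMb hu_pde hpos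
        (by positivity : 0 < J 0 / 2) hrpos hJr hx (Set.mem_Ico.2 ⟨le_rfl, hT⟩)
        hρ₀pos hηpos ha0sub ?_ hlow0 t ht
      intro y hy
      have := ha0near y hy
      have h1 : |x - y| ≤ |x - x₁| + |x₁ - y| := by
        have := abs_sub_le x x₁ y; linarith [abs_sub_le x x₁ y]
      have h2 : |x₁ - y| = |y - x₁| := abs_sub_comm _ _
      linarith
    | succ k ih =>
      intro x hx hdist t ht
      rcases le_or_gt (|x - x₁|) (ρ₀ + k * ρ₀) with hcase | hcase
      · exact ih x hx hcase t ht
      -- geometric construction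
      have hDpos : 0 < |x - x₁| := lt_of_le_of_lt (by positivity) hcase
      set D : ℝ := |x - x₁| with hDdef
      set θ : ℝ := (k * ρ₀) / D with hθdef
      have hθ0 : 0 ≤ θ := by positivity
      have hθ1 : θ ≤ 1 := by
        rw [hθdef, div_le_one hDpos]
        nlinarith
      set z : ℝ := x₁ + (x - x₁) * θ with hzdef
      have hzmem : z ∈ Icc (-h₀) h₀ := by
        constructor
        · nlinarith [mul_nonneg (sub_nonneg.2 hθ1) (sub_nonneg.2 hx₁.1),
            mul_nonneg hθ0 (sub_nonneg.2 hx.1)]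
        · nlinarith [mul_nonneg (sub_nonneg.2 hθ1) (sub_nonneg.2 hx₁.2),
            mul_nonneg hθ0 (sub_nonneg.2 hx.2)]
      have hzx₁ : |z - x₁| = k * ρ₀ := by
        rw [hzdef]
        have : x₁ + (x - x₁) * θ - x₁ = (x - x₁) * θ := by ring
        rw [this, abs_mul, abs_of_nonneg hθ0, hθdef]
        field_simp
        rw [hDdef]; ring
      have hzx : |z - x| ≤ 2 * ρ₀ := by
        have h1 : z - x = (x - x₁) * (θ - 1) := by rw [hzdef]; ring
        have h5 : |θ - 1| = 1 - θ := by
          rw [abs_of_nonpos (by linarith : θ - 1 ≤ 0)]; ring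
        have h2 : D * (1 - θ) = D - k * ρ₀ := by
          rw [hθdef]; field_simp
        rw [h1, abs_mul, h5, ← hDdef, h2]
        push_cast at hdist ⊢
        linarith
      obtain ⟨a1, ha1sub, ha1near⟩ := mp_interval hh₀ hzmem hρ₀pos hρ₀h
      -- compact minimum
      have hKcomp : IsCompact (Icc (t/2) T ×ˢ Icc a1 (a1 + ρ₀)) :=
        isCompact_Icc.prod isCompact_Icc
      have hKne : (Icc (t/2) T ×ˢ Icc a1 (a1 + ρ₀)).Nonempty := by
        refine ⟨(t/2, a1), ⟨⟨?_, ?_⟩, ⟨le_rfl, by linarith⟩⟩⟩ <;> [skip; skip] <;>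
          linarith [ht.1, ht.2]
      have hKsub : Icc (t/2) T ×ˢ Icc a1 (a1 + ρ₀) ⊆ Icc 0 T ×ˢ Icc (-h₀) h₀ := by
        intro p hp
        exact ⟨⟨by linarith [hp.1.1, ht.1], hp.1.2⟩, ha1sub hp.2⟩
      obtain ⟨⟨τs, ys⟩, hpmem, hmin⟩ := hKcomp.exists_isMinOn hKne (hucont.mono hKsub)
      have hysmem : ys ∈ Icc a1 (a1 + ρ₀) := hpmem.2
      have hysIcc : ys ∈ Icc (-h₀) h₀ := ha1sub hysmem
      have hysx₁ : |ys - x₁| ≤ ρ₀ + k * ρ₀ := by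
        have h1 := ha1near ys hysmem
        have h2 : |ys - x₁| ≤ |ys - z| + |z - x₁| := abs_sub_le ys z x₁
        rw [hzx₁] at h2
        linarith
      have hτs : τs ∈ Ioc 0 T := ⟨by linarith [hpmem.1.1, ht.1], hpmem.1.2⟩
      have hη₁pos : 0 < u τs ys := ih ys hysIcc hysx₁ τs hτs
      have hlow1 : ∀ τ ∈ Icc (t/2) T, ∀ y ∈ Icc a1 (a1 + ρ₀), u τs ys ≤ u τ y := by
        intro τ hτ y hy
        exact hmin (Set.mk_mem_prod hτ hy)
      have hs2 : t/2 ∈ Ico 0 T := ⟨by linarith [ht.1], by linarith [ht.1, ht.2]⟩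
      refine mp_push hJcont hJnn hd hT hh₀ hucont hM0 hMb hu_pde hpos
        (by positivity : 0 < J 0 / 2) hrpos hJr hx hs2 hρ₀pos hη₁pos ha1sub ?_ hlow1 t
        ⟨by linarith [ht.1], ht.2⟩
      intro y hy
      have h1 := ha1near y hy
      have h2 : |x - y| ≤ |x - z| + |z - y| := abs_sub_le x z y
      have h3 : |x - z| = |z - x| := abs_sub_comm _ _
      have h4 : |z - y| = |y - z| := abs_sub_comm _ _
      rw [h3, h4] at h2
      linarith
  -- conclusion
  intro t ht x hx
  obtain ⟨k, hk⟩ := exists_nat_ge (2 * h₀ / ρ₀)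
  refine main k x hx ?_ t ht
  have h1 : 2 * h₀ ≤ k * ρ₀ := by
    rw [div_le_iff₀ hρ₀pos] at hk
    linarith
  have h2 : |x - x₁| ≤ 2 * h₀ := by
    rw [abs_le]
    constructor <;> linarith [hx.1, hx.2, hx₁.1, hx₁.2]
  linarith


end

/-- Lemma 2.2 (maximum principle on a fixed domain). -/
theorem maximum_principle_fixed_domain
    (J : ℝ → ℝ) (hJ : KernelCond J) (d T h₀ : ℝ)
    (hd : 0 < d) (hT : 0 < T) (hh₀ : 0 < h₀)
    (u : ℝ → ℝ → ℝ)
    (hucont : ContinuousOn (fun p : ℝ × ℝ => u p.1 p.2) (Icc 0 T ×ˢ Icc (-h₀) h₀))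
    (ϱ : ℝ → ℝ → ℝ) (hϱmeas : Measurable (Function.uncurry ϱ))
    (hϱbdd : ∃ M, ∀ t x, |ϱ t x| ≤ M)
    (hu_pde : ∀ t ∈ Ioc 0 T, ∀ x ∈ Icc (-h₀) h₀,
      DifferentiableAt ℝ (fun s => u s x) t ∧
      d * ((∫ y in (-h₀)..h₀, J (x - y) * u t y) - u t x) + ϱ t x * u t x ≤
        deriv (fun s => u s x) t)
    (hinit : ∀ x ∈ Icc (-h₀) h₀, 0 ≤ u 0 x) :
    (∀ t ∈ Icc 0 T, ∀ x ∈ Icc (-h₀) h₀, 0 ≤ u t x) ∧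
    ((∃ x ∈ Icc (-h₀) h₀, u 0 x ≠ 0) →
      ∀ t ∈ Ioc 0 T, ∀ x ∈ Icc (-h₀) h₀, 0 < u t x) := by
  obtain ⟨M, hMb⟩ := hϱbdd
  have hM0 : 0 ≤ M := le_trans (abs_nonneg _) (hMb 0 0)
  obtain ⟨K, hK⟩ := hJ.lipschitz
  have hJcont : Continuous J := hK.continuous
  have hpos := mp_part1 hJcont hJ.nonneg hJ.integrable hJ.integral_one hd hT hh₀ hucont
    hM0 hMb hu_pde hinit
  refine ⟨hpos, ?_⟩
  rintro ⟨x₁, hx₁, hne⟩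
  exact mp_part2 hJcont hJ.nonneg hJ.pos_at_zero hd hT hh₀ hucont hM0 hMb hu_pde hinit
    hpos hx₁ hne
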